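/- Let S = ℂ[u₁, u₂, w₁, w₂]/(u₁w₂ − u₂w₁), graded by total degree of the standard grading on the polynomial ring (the ideal is homogeneous, so S is graded). Then for every natural number d, the degree-d homogeneous component of S is a ℂ-vector space of dimension (d+1)². -/

import Mathlib

noncomputable section

open MvPolynomial

/-- The (homogeneous) ideal of the undeformed conifold `u₁w₂ − u₂w₁ = 0` in
`ℂ[u₁, u₂, w₁, w₂] = MvPolynomial (Fin 4) ℂ`, with `u₁ = X 0`, `u₂ = X 1`,
`w₁ = X 2`, `w₂ = X 3`. -/
def conifoldIdeal : Ideal (MvPolynomial (Fin 4) ℂ) :=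
  Ideal.span {(X 0 : MvPolynomial (Fin 4) ℂ) * X 3 - X 1 * X 2}

/-- The coordinate ring `S = ℂ[u₁, u₂, w₁, w₂]/(u₁w₂ − u₂w₁)` of the conifold. -/
abbrev ConifoldCoordRing : Type := MvPolynomial (Fin 4) ℂ ⧸ conifoldIdeal

/-- The degree-`d` homogeneous component of the graded ring
`S = ℂ[u₁, u₂, w₁, w₂]/(u₁w₂ − u₂w₁)` (the ideal being homogeneous, this is the image
in `S` of the space of degree-`d` homogeneous polynomials). -/
def conifoldComponent (d : ℕ) : Submodule ℂ ConifoldCoordRing :=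
  Submodule.map (Ideal.Quotient.mkₐ ℂ conifoldIdeal).toLinearMap
    (homogeneousSubmodule (Fin 4) ℂ d)

/-! ### Auxiliary material -/

/-- The defining quadric `u₁w₂ − u₂w₁` of the conifold. -/
def qpoly : MvPolynomial (Fin 4) ℂ := X 0 * X 3 - X 1 * X 2

lemma qpoly_homog : qpoly.IsHomogeneous 2 :=
  ((isHomogeneous_X _ _).mul (isHomogeneous_X _ _)).sub
    ((isHomogeneous_X _ _).mul (isHomogeneous_X _ _))

lemma qpoly_ne_zero : qpoly ≠ 0 := by
  intro h
  have := congrArg (MvPolynomial.eval (![1,0,0,1] : Fin 4 → ℂ)) h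
  simp [qpoly] at this

lemma conifoldIdeal_eq : conifoldIdeal = Ideal.span {qpoly} := rfl

lemma homComp_qpoly_mul_aux (f : MvPolynomial (Fin 4) ℂ) (m i : ℕ) :
    homogeneousComponent m (qpoly * homogeneousComponent i f)
      = if m = 2 + i then qpoly * homogeneousComponent i f else 0 :=
  homogeneousComponent_of_mem (qpoly_homog.mul (homogeneousComponent_isHomogeneous i f))

lemma homComp_qpoly_mul (f : MvPolynomial (Fin 4) ℂ) (n : ℕ) :
    homogeneousComponent (n + 2) (qpoly * f) = qpoly * homogeneousComponent n f := by
  conv_lhs => rw [← sum_homogeneousComponent f, Finset.mul_sum, map_sum]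
  simp_rw [homComp_qpoly_mul_aux]
  have h2 : ∀ i ∈ Finset.range (f.totalDegree + 1),
      (if n + 2 = 2 + i then qpoly * homogeneousComponent i f else 0)
        = if i = n then qpoly * homogeneousComponent i f else 0 := by
    intro i _
    congr 1
    simp only [eq_iff_iff]
    omega
  rw [Finset.sum_congr rfl h2, Finset.sum_ite_eq' (Finset.range (f.totalDegree + 1)) n]
  split_ifs with h
  · rfl
  · simp only [Finset.mem_range] at h
    rw [homogeneousComponent_eq_zero n f (by omega), mul_zero]

lemma homComp_qpoly_mul_small (f : MvPolynomial (Fin 4) ℂ) (m : ℕ) (hm : m < 2) :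
    homogeneousComponent m (qpoly * f) = 0 := by
  conv_lhs => rw [← sum_homogeneousComponent f, Finset.mul_sum, map_sum]
  apply Finset.sum_eq_zero
  intro i _
  rw [homComp_qpoly_mul_aux, if_neg (by omega)]

/-! ### Dimension of the spaces of homogeneous polynomials -/

def degreeSetEquivSym (n : ℕ) :
    Sym (Fin 4) n ≃ {d : Fin 4 →₀ ℕ // Finsupp.degree d = n} :=
  (Sym.equivNatSum (Fin 4) n).trans
    (Equiv.subtypeEquivRight (fun P => by
      simp [Finsupp.degree, Finsupp.sum]; rfl))

instance degSetFintype (n : ℕ) : Fintype {d : Fin 4 →₀ ℕ // Finsupp.degree d = n} :=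
  Fintype.ofEquiv _ (degreeSetEquivSym n)

lemma card_degSet (n : ℕ) :
    Fintype.card {d : Fin 4 →₀ ℕ // Finsupp.degree d = n} = (n + 3).choose 3 := by
  rw [← Fintype.card_congr (degreeSetEquivSym n), Sym.card_sym_eq_choose]
  have h4 : Fintype.card (Fin 4) = 4 := by simp
  rw [h4]
  have : 4 + n - 1 = n + 3 := by omega
  rw [this]
  have := Nat.choose_symm (n := n + 3) (k := 3) (by omega)
  simpa [show n + 3 - 3 = n by omega] using this

def homogEquiv (n : ℕ) :
    homogeneousSubmodule (Fin 4) ℂ n ≃ₗ[ℂ]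
      ({d : Fin 4 →₀ ℕ | Finsupp.degree d = n} →₀ ℂ) :=
  (LinearEquiv.ofEq _ _ (homogeneousSubmodule_eq_finsupp_supported (σ := Fin 4) ℂ n)).trans
    (AddMonoidAlgebra.supportedEquivFinsupp _)

instance degSetFintype' (n : ℕ) : Fintype {d : Fin 4 →₀ ℕ | Finsupp.degree d = n} :=
  degSetFintype n

instance homogFinite (n : ℕ) :
    FiniteDimensional ℂ (homogeneousSubmodule (Fin 4) ℂ n) :=
  Module.Finite.equiv (homogEquiv n).symm

lemma finrank_homog (n : ℕ) :
    Module.finrank ℂ (homogeneousSubmodule (Fin 4) ℂ n) = (n + 3).choose 3 := by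
  rw [(homogEquiv n).finrank_eq, Module.finrank_finsupp_self]
  exact card_degSet n

/-! ### Binomial arithmetic -/

lemma c2 (m : ℕ) : (m + 2).choose 2 * 2 = (m + 1) * (m + 2) := by
  induction m with
  | zero => decide
  | succ k ih =>
    have : (k + 3).choose 2 = (k + 2).choose 2 + (k + 2).choose 1 := by
      rw [show k + 3 = (k + 2) + 1 by omega, Nat.choose_succ_succ' (k+2) 1]
      norm_num [add_comm]
    rw [show k + 1 + 2 = k + 3 by omega, this]
    simp [Nat.choose_one_right] at *
    nlinarith [ih]

lemma c3 (m : ℕ) : (m + 3).choose 3 * 6 = (m + 1) * (m + 2) * (m + 3) := by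
  induction m with
  | zero => decide
  | succ k ih =>
    have : (k + 4).choose 3 = (k + 3).choose 3 + (k + 3).choose 2 := by
      rw [show k + 4 = (k + 3) + 1 by omega, Nat.choose_succ_succ' (k+3) 2]
      norm_num [add_comm]
    have h2 := c2 (k + 1)
    rw [show k + 1 + 3 = k + 4 by omega, this]
    rw [show k + 1 + 2 = k + 3 by omega] at h2
    nlinarith [ih, h2]

lemma key_id (n : ℕ) : (n + 3) ^ 2 + (n + 3).choose 3 = (n + 5).choose 3 := by
  have h1 := c3 n
  have h2 := c3 (n + 2)
  rw [show n + 2 + 3 = n + 5 by omega, show n + 2 + 1 = n + 3 by omega,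
    show n + 2 + 2 = n + 4 by omega] at h2
  nlinarith [h1, h2]

/-! ### The restricted quotient map and its kernel -/

/-- The quotient map, restricted to the degree-`d` homogeneous polynomials. -/
def gmap (d : ℕ) : homogeneousSubmodule (Fin 4) ℂ d →ₗ[ℂ] ConifoldCoordRing :=
  (Ideal.Quotient.mkₐ ℂ conifoldIdeal).toLinearMap ∘ₗ
    (homogeneousSubmodule (Fin 4) ℂ d).subtype

lemma range_gmap (d : ℕ) : LinearMap.range (gmap d) = conifoldComponent d := by
  rw [gmap, LinearMap.range_comp, Submodule.range_subtype, conifoldComponent]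

lemma mem_ker_gmap (d : ℕ) (x : homogeneousSubmodule (Fin 4) ℂ d) :
    x ∈ LinearMap.ker (gmap d) ↔ qpoly ∣ (x : MvPolynomial (Fin 4) ℂ) := by
  rw [LinearMap.mem_ker]
  change Ideal.Quotient.mkₐ ℂ conifoldIdeal (x : MvPolynomial (Fin 4) ℂ) = 0 ↔ _
  rw [Ideal.Quotient.mkₐ_eq_mk, Ideal.Quotient.eq_zero_iff_mem, conifoldIdeal_eq,
    Ideal.mem_span_singleton]

lemma ker_gmap_small (d : ℕ) (hd : d < 2) : LinearMap.ker (gmap d) = ⊥ := by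
  rw [Submodule.eq_bot_iff]
  rintro x hx
  rw [mem_ker_gmap] at hx
  obtain ⟨c, hc⟩ := hx
  have hmem : (x : MvPolynomial (Fin 4) ℂ) ∈ homogeneousSubmodule (Fin 4) ℂ d := x.2
  have h1 : homogeneousComponent d (x : MvPolynomial (Fin 4) ℂ)
      = (x : MvPolynomial (Fin 4) ℂ) := by
    rw [homogeneousComponent_of_mem hmem, if_pos rfl]
  have h2 : homogeneousComponent d (x : MvPolynomial (Fin 4) ℂ) = 0 := by
    rw [hc, homComp_qpoly_mul_small c d hd]
  exact Subtype.ext (by rw [← h1, h2]; rfl)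

/-- Multiplication by `qpoly`, as a map into the kernel of `gmap (n+2)`. -/
def psimap (n : ℕ) : homogeneousSubmodule (Fin 4) ℂ n →ₗ[ℂ] LinearMap.ker (gmap (n + 2)) where
  toFun f := ⟨⟨qpoly * (f : MvPolynomial (Fin 4) ℂ), by
      simpa [add_comm] using qpoly_homog.mul f.2⟩, by
    rw [mem_ker_gmap]
    exact Dvd.intro _ rfl⟩
  map_add' f g := by
    ext
    simp [mul_add]
  map_smul' a f := by
    ext
    simp [mul_smul_comm]

lemma psimap_bijective (n : ℕ) : Function.Bijective (psimap n) := by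
  constructor
  · intro f g hfg
    have h : qpoly * (f : MvPolynomial (Fin 4) ℂ) = qpoly * (g : MvPolynomial (Fin 4) ℂ) :=
      congrArg Subtype.val (congrArg Subtype.val hfg)
    exact Subtype.ext (mul_left_cancel₀ qpoly_ne_zero h)
  · rintro ⟨x, hx⟩
    obtain ⟨c, hc⟩ := (mem_ker_gmap (n + 2) x).mp hx
    refine ⟨⟨homogeneousComponent n c, homogeneousComponent_mem n c⟩, ?_⟩
    have h1 : homogeneousComponent (n + 2) (x : MvPolynomial (Fin 4) ℂ)
        = (x : MvPolynomial (Fin 4) ℂ) := by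
      rw [homogeneousComponent_of_mem x.2, if_pos rfl]
    have h2 : qpoly * homogeneousComponent n c = (x : MvPolynomial (Fin 4) ℂ) := by
      rw [← homComp_qpoly_mul c n, ← hc, h1]
    exact Subtype.ext (Subtype.ext h2)

set_option synthInstance.maxHeartbeats 1000000 in
lemma finrank_ker_gmap (n : ℕ) :
    Module.finrank ℂ (LinearMap.ker (gmap (n + 2))) = (n + 3).choose 3 := by
  rw [← (LinearEquiv.ofBijective (psimap n) (psimap_bijective n)).finrank_eq]
  exact finrank_homog n

/-! ### Main theorem -/

/-- For every `d`, the degree-`d` homogeneous component of the coordinate ring of the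
conifold `u₁w₂ − u₂w₁ = 0` has complex dimension `(d+1)²`, realizing the decomposition
`𝒪(Z) = ⊕_{m ≥ 1} (spin (m−1)/2, spin (m−1)/2)` under `SU(2)_R × SL₂`. -/
theorem conifoldComponent_finrank (d : ℕ) :
    Module.finrank ℂ (conifoldComponent d) = (d + 1) ^ 2 := by
  have hrn := LinearMap.finrank_range_add_finrank_ker (gmap d)
  rw [range_gmap, finrank_homog d] at hrn
  match d with
  | 0 =>
    rw [ker_gmap_small 0 (by omega), finrank_bot] at hrn
    simpa using hrn
  | 1 =>
    rw [ker_gmap_small 1 (by omega), finrank_bot] at hrn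
    have h4 : Nat.choose 4 3 = 4 := by decide
    simp only [Nat.reduceAdd] at hrn ⊢
    omega
  | (n + 2) =>
    rw [finrank_ker_gmap n] at hrn
    have := key_id n
    rw [show n + 2 + 3 = n + 5 by omega] at hrn
    rw [show n + 2 + 1 = n + 3 by omega]
    omega
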